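/- Let Δ ∈ ℝ^{n×n×L} be any 3-way tensor, let δ ∈ (0,1], let U be an n×r matrix with orthonormal columns (UᵀU = I_r) each of whose rows has Euclidean norm at most δ, and let G be any L×m matrix. Then the tensor spectral norm of Δ ×₂ Uᵀ ×₃ Gᵀ ∈ ℝ^{n×r×m} satisfies ‖Δ ×₂ Uᵀ ×₃ Gᵀ‖ ≤ ‖G‖ · ‖Δ‖_{2,δ}, where ‖G‖ is the matrix operator (spectral) norm. -/

import Mathlib

/-- The spectral norm of a 3-way tensor. -/
noncomputable def tensorNorm {n₁ n₂ n₃ : ℕ} (T : Fin n₁ → Fin n₂ → Fin n₃ → ℝ) : ℝ :=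
  sSup {x | ∃ (u₁ : Fin n₁ → ℝ) (u₂ : Fin n₂ → ℝ) (u₃ : Fin n₃ → ℝ),
    (∑ i, (u₁ i) ^ 2 ≤ 1) ∧ (∑ i, (u₂ i) ^ 2 ≤ 1) ∧ (∑ i, (u₃ i) ^ 2 ≤ 1) ∧
    x = ∑ i₁, ∑ i₂, ∑ i₃, T i₁ i₂ i₃ * u₁ i₁ * u₂ i₂ * u₃ i₃}

/-- The mode-2 tensor incoherent norm `‖T‖_{2,δ}`. -/
noncomputable def incohNorm2 {n₁ n₂ n₃ : ℕ} (δ : ℝ)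
    (T : Fin n₁ → Fin n₂ → Fin n₃ → ℝ) : ℝ :=
  sSup {x | ∃ (u₁ : Fin n₁ → ℝ) (u₂ : Fin n₂ → ℝ) (u₃ : Fin n₃ → ℝ),
    (∑ i, (u₁ i) ^ 2 ≤ 1) ∧ (∑ i, (u₂ i) ^ 2 ≤ 1) ∧ (∑ i, (u₃ i) ^ 2 ≤ 1) ∧
    (∀ i, |u₂ i| ≤ δ) ∧
    x = ∑ i₁, ∑ i₂, ∑ i₃, T i₁ i₂ i₃ * u₁ i₁ * u₂ i₂ * u₃ i₃}

/-- The matrix operator (spectral) norm, expressed as a bilinear supremum. -/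
noncomputable def matOpNorm {p q : ℕ} (M : Matrix (Fin p) (Fin q) ℝ) : ℝ :=
  sSup {x | ∃ (u : Fin p → ℝ) (v : Fin q → ℝ),
    (∑ a, (u a) ^ 2 ≤ 1) ∧ (∑ b, (v b) ^ 2 ≤ 1) ∧
    x = ∑ a, ∑ b, u a * M a b * v b}


section Aux

lemma aux_abs_le_one {k : ℕ} {u : Fin k → ℝ} (h : ∑ i, (u i) ^ 2 ≤ 1) (i : Fin k) :
    |u i| ≤ 1 := by
  have h1 : (u i) ^ 2 ≤ 1 :=
    le_trans (Finset.single_le_sum (fun j _ => sq_nonneg (u j)) (Finset.mem_univ i)) h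
  nlinarith [abs_nonneg (u i), sq_abs (u i)]

lemma aux_triple_bound {n₁ n₂ n₃ : ℕ} (T : Fin n₁ → Fin n₂ → Fin n₃ → ℝ)
    (u₁ : Fin n₁ → ℝ) (u₂ : Fin n₂ → ℝ) (u₃ : Fin n₃ → ℝ)
    (h1 : ∀ i, |u₁ i| ≤ 1) (h2 : ∀ i, |u₂ i| ≤ 1) (h3 : ∀ i, |u₃ i| ≤ 1) :
    ∑ i₁, ∑ i₂, ∑ i₃, T i₁ i₂ i₃ * u₁ i₁ * u₂ i₂ * u₃ i₃
      ≤ ∑ i₁, ∑ i₂, ∑ i₃, |T i₁ i₂ i₃| := by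
  refine Finset.sum_le_sum fun i₁ _ => Finset.sum_le_sum fun i₂ _ =>
    Finset.sum_le_sum fun i₃ _ => ?_
  calc T i₁ i₂ i₃ * u₁ i₁ * u₂ i₂ * u₃ i₃ ≤ |T i₁ i₂ i₃ * u₁ i₁ * u₂ i₂ * u₃ i₃| :=
        le_abs_self _
    _ = |T i₁ i₂ i₃| * |u₁ i₁| * |u₂ i₂| * |u₃ i₃| := by rw [abs_mul, abs_mul, abs_mul]
    _ ≤ |T i₁ i₂ i₃| * 1 * 1 * 1 := by
        gcongr <;> first | exact abs_nonneg _ | exact h1 i₁ | exact h2 i₂ | exact h3 i₃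
    _ = |T i₁ i₂ i₃| := by ring

lemma aux_bddAbove_incoh {n₁ n₂ n₃ : ℕ} (δ : ℝ) (T : Fin n₁ → Fin n₂ → Fin n₃ → ℝ) :
    BddAbove {x | ∃ (u₁ : Fin n₁ → ℝ) (u₂ : Fin n₂ → ℝ) (u₃ : Fin n₃ → ℝ),
      (∑ i, (u₁ i) ^ 2 ≤ 1) ∧ (∑ i, (u₂ i) ^ 2 ≤ 1) ∧ (∑ i, (u₃ i) ^ 2 ≤ 1) ∧
      (∀ i, |u₂ i| ≤ δ) ∧
      x = ∑ i₁, ∑ i₂, ∑ i₃, T i₁ i₂ i₃ * u₁ i₁ * u₂ i₂ * u₃ i₃} := by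
  refine ⟨∑ i₁, ∑ i₂, ∑ i₃, |T i₁ i₂ i₃|, ?_⟩
  rintro x ⟨u₁, u₂, u₃, h1, h2, h3, _, rfl⟩
  exact aux_triple_bound T u₁ u₂ u₃ (aux_abs_le_one h1) (aux_abs_le_one h2) (aux_abs_le_one h3)

lemma aux_bddAbove_mat {p q : ℕ} (M : Matrix (Fin p) (Fin q) ℝ) :
    BddAbove {x | ∃ (u : Fin p → ℝ) (v : Fin q → ℝ),
      (∑ a, (u a) ^ 2 ≤ 1) ∧ (∑ b, (v b) ^ 2 ≤ 1) ∧
      x = ∑ a, ∑ b, u a * M a b * v b} := by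
  refine ⟨∑ a, ∑ b, |M a b|, ?_⟩
  rintro x ⟨u, v, h1, h2, rfl⟩
  have hu := aux_abs_le_one h1
  have hv' := aux_abs_le_one h2
  refine Finset.sum_le_sum fun a _ => Finset.sum_le_sum fun b _ => ?_
  have t1 : |M a b| * |u a| ≤ |M a b| := by
    nlinarith [abs_nonneg (M a b), abs_nonneg (u a), hu a]
  have t2 : |M a b| * |u a| * |v b| ≤ |M a b| * |u a| := by
    nlinarith [mul_nonneg (abs_nonneg (M a b)) (abs_nonneg (u a)), abs_nonneg (v b), hv' b]
  calc u a * M a b * v b ≤ |u a * M a b * v b| := le_abs_self _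
    _ = |M a b| * |u a| * |v b| := by rw [abs_mul, abs_mul]; ring
    _ ≤ |M a b| := le_trans t2 t1

lemma aux_incoh_nonneg {n₁ n₂ n₃ : ℕ} {δ : ℝ} (hδ : 0 < δ)
    (T : Fin n₁ → Fin n₂ → Fin n₃ → ℝ) : 0 ≤ incohNorm2 δ T := by
  refine le_csSup (aux_bddAbove_incoh δ T) ?_
  exact ⟨0, 0, 0, by simp, by simp, by simp, fun i => by simp [hδ.le], by simp⟩

lemma aux_mat_nonneg {p q : ℕ} (M : Matrix (Fin p) (Fin q) ℝ) : 0 ≤ matOpNorm M := by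
  refine le_csSup (aux_bddAbove_mat M) ?_
  exact ⟨0, 0, by simp, by simp, by simp⟩

lemma aux_sum_swap4 {α β γ σ : Type*} [Fintype α] [Fintype β] [Fintype γ] [Fintype σ]
    (f : α → β → γ → σ → ℝ) :
    ∑ a, ∑ b, ∑ c, ∑ d, f a b c d = ∑ c, ∑ d, ∑ a, ∑ b, f a b c d := by
  calc ∑ a, ∑ b, ∑ c, ∑ d, f a b c d
      = ∑ a, ∑ c, ∑ b, ∑ d, f a b c d :=
        Finset.sum_congr rfl fun a _ => Finset.sum_comm
    _ = ∑ c, ∑ a, ∑ b, ∑ d, f a b c d := Finset.sum_comm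
    _ = ∑ c, ∑ a, ∑ d, ∑ b, f a b c d :=
        Finset.sum_congr rfl fun c _ => Finset.sum_congr rfl fun a _ => Finset.sum_comm
    _ = ∑ c, ∑ d, ∑ a, ∑ b, f a b c d :=
        Finset.sum_congr rfl fun c _ => Finset.sum_comm

end Aux

theorem mode_product_incoherent_norm_bound
    (n L r m : ℕ) (Δ : Fin n → Fin n → Fin L → ℝ)
    (δ : ℝ) (hδ : δ ∈ Set.Ioc (0 : ℝ) 1)
    (U : Matrix (Fin n) (Fin r) ℝ) (hU : U.transpose * U = 1)
    (hUrow : ∀ i, Real.sqrt (∑ a, (U i a) ^ 2) ≤ δ)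
    (G : Matrix (Fin L) (Fin m) ℝ) :
    tensorNorm (fun i₁ a b => ∑ i₂, ∑ i₃, Δ i₁ i₂ i₃ * U i₂ a * G i₃ b)
      ≤ matOpNorm G * incohNorm2 δ Δ := by
  obtain ⟨hδ0, hδ1⟩ := hδ
  have hRHS : 0 ≤ matOpNorm G * incohNorm2 δ Δ :=
    mul_nonneg (aux_mat_nonneg G) (aux_incoh_nonneg hδ0 Δ)
  refine Real.sSup_le ?_ hRHS
  rintro x ⟨u₁, u₂, u₃, h1, h2, h3, rfl⟩
  set v : Fin n → ℝ := fun i₂ => ∑ a, U i₂ a * u₂ a with hv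
  set w : Fin L → ℝ := fun i₃ => ∑ b, G i₃ b * u₃ b with hw
  -- rearrangement
  have key : ∑ i₁, ∑ a, ∑ b,
      (∑ i₂, ∑ i₃, Δ i₁ i₂ i₃ * U i₂ a * G i₃ b) * u₁ i₁ * u₂ a * u₃ b
      = ∑ i₁, ∑ i₂, ∑ i₃, Δ i₁ i₂ i₃ * u₁ i₁ * v i₂ * w i₃ := by
    refine Finset.sum_congr rfl fun i₁ _ => ?_
    calc ∑ a, ∑ b, (∑ i₂, ∑ i₃, Δ i₁ i₂ i₃ * U i₂ a * G i₃ b) * u₁ i₁ * u₂ a * u₃ b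
        = ∑ a, ∑ b, ∑ i₂, ∑ i₃,
            Δ i₁ i₂ i₃ * U i₂ a * G i₃ b * u₁ i₁ * u₂ a * u₃ b := by
          simp only [Finset.sum_mul]
      _ = ∑ i₂, ∑ i₃, ∑ a, ∑ b,
            Δ i₁ i₂ i₃ * U i₂ a * G i₃ b * u₁ i₁ * u₂ a * u₃ b := aux_sum_swap4 _
      _ = ∑ i₂, ∑ i₃, Δ i₁ i₂ i₃ * u₁ i₁ * v i₂ * w i₃ := by
          refine Finset.sum_congr rfl fun i₂ _ => Finset.sum_congr rfl fun i₃ _ => ?_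
          simp only [hv, hw, Finset.mul_sum, Finset.sum_mul]
          refine Eq.trans Finset.sum_comm ?_
          refine Finset.sum_congr rfl fun b _ => Finset.sum_congr rfl fun a _ => by ring
  rw [key]
  -- properties of v
  have hv_sq : ∑ i₂, (v i₂) ^ 2 ≤ 1 := by
    have expand : ∑ i₂, (v i₂) ^ 2 = ∑ a, ∑ a', (∑ i₂, U i₂ a * U i₂ a') * (u₂ a * u₂ a') := by
      calc ∑ i₂, (v i₂) ^ 2
          = ∑ i₂, ∑ a, ∑ a', (U i₂ a * u₂ a) * (U i₂ a' * u₂ a') := by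
            refine Finset.sum_congr rfl fun i₂ _ => ?_
            rw [sq]
            show (∑ a, U i₂ a * u₂ a) * (∑ a', U i₂ a' * u₂ a') = _
            rw [Finset.sum_mul_sum]
        _ = ∑ a, ∑ i₂, ∑ a', (U i₂ a * u₂ a) * (U i₂ a' * u₂ a') := Finset.sum_comm
        _ = ∑ a, ∑ a', ∑ i₂, (U i₂ a * u₂ a) * (U i₂ a' * u₂ a') := by
            exact Finset.sum_congr rfl fun a _ => Finset.sum_comm
        _ = ∑ a, ∑ a', (∑ i₂, U i₂ a * U i₂ a') * (u₂ a * u₂ a') := by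
            refine Finset.sum_congr rfl fun a _ => Finset.sum_congr rfl fun a' _ => ?_
            rw [Finset.sum_mul]
            exact Finset.sum_congr rfl fun i₂ _ => by ring
    rw [expand]
    have horth : ∀ a a' : Fin r, (∑ i₂, U i₂ a * U i₂ a') = if a = a' then (1:ℝ) else 0 := by
      intro a a'
      have := congrFun (congrFun hU a) a'
      simpa [Matrix.mul_apply, Matrix.transpose_apply, Matrix.one_apply] using this
    calc ∑ a, ∑ a', (∑ i₂, U i₂ a * U i₂ a') * (u₂ a * u₂ a')
        = ∑ a, (u₂ a) ^ 2 := by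
          refine Finset.sum_congr rfl fun a _ => ?_
          simp only [horth]
          rw [Finset.sum_eq_single a (fun b _ hb => by simp [Ne.symm hb])
            (fun h => absurd (Finset.mem_univ a) h)]
          simp [sq]
      _ ≤ 1 := h2
  have hv_abs : ∀ i₂, |v i₂| ≤ δ := by
    intro i₂
    have hcs := Finset.sum_mul_sq_le_sq_mul_sq Finset.univ (fun a => U i₂ a) u₂
    have hrow : ∑ a, (U i₂ a) ^ 2 ≤ δ ^ 2 := by
      have h0 : 0 ≤ ∑ a, (U i₂ a) ^ 2 := Finset.sum_nonneg fun a _ => sq_nonneg _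
      nlinarith [hUrow i₂, Real.sq_sqrt h0, Real.sqrt_nonneg (∑ a, (U i₂ a) ^ 2)]
    have : (v i₂) ^ 2 ≤ δ ^ 2 := by
      calc (v i₂) ^ 2 ≤ (∑ a, (U i₂ a) ^ 2) * ∑ a, (u₂ a) ^ 2 := hcs
        _ ≤ δ ^ 2 * 1 := by
            refine mul_le_mul hrow h2 (Finset.sum_nonneg fun a _ => sq_nonneg _) (by positivity)
        _ = δ ^ 2 := by ring
    nlinarith [abs_nonneg (v i₂), sq_abs (v i₂)]
  -- the w vector
  set s2 : ℝ := ∑ i₃, (w i₃) ^ 2 with hs2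
  have hs2_nonneg : 0 ≤ s2 := Finset.sum_nonneg fun i _ => sq_nonneg _
  by_cases hs : s2 = 0
  · -- all w are zero
    have hwz : ∀ i₃, w i₃ = 0 := by
      intro i₃
      have := (Finset.sum_eq_zero_iff_of_nonneg (fun i _ => sq_nonneg (w i))).mp hs i₃
        (Finset.mem_univ i₃)
      exact pow_eq_zero_iff (n := 2) (by norm_num) |>.mp this
    simp only [hwz, mul_zero, Finset.sum_const_zero]
    exact hRHS
  · have hs2_pos : 0 < s2 := lt_of_le_of_ne hs2_nonneg (Ne.symm hs)
    set s : ℝ := Real.sqrt s2 with hsdef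
    have hs_pos : 0 < s := Real.sqrt_pos.mpr hs2_pos
    have hs_sq : s ^ 2 = s2 := Real.sq_sqrt hs2_nonneg
    set w' : Fin L → ℝ := fun i₃ => w i₃ / s with hw'
    have hw'_sq : ∑ i₃, (w' i₃) ^ 2 = 1 := by
      simp only [hw', div_pow]
      rw [← Finset.sum_div, ← hs2, hs_sq, div_self hs]
    -- s ≤ matOpNorm G
    have hs_le : s ≤ matOpNorm G := by
      refine le_csSup (aux_bddAbove_mat G) ?_
      refine ⟨w', u₃, le_of_eq hw'_sq, h3, ?_⟩
      have key2 : ∑ a, ∑ b, w' a * G a b * u₃ b = (∑ a, w a * w a) / s := by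
        rw [Finset.sum_div]
        refine Finset.sum_congr rfl fun a _ => ?_
        have hwa : ∑ b, G a b * u₃ b = w a := rfl
        calc ∑ b, w' a * G a b * u₃ b = w a / s * ∑ b, G a b * u₃ b := by
              rw [Finset.mul_sum]
              exact Finset.sum_congr rfl fun b _ => by simp only [hw']; ring
          _ = w a * w a / s := by rw [hwa]; ring
      rw [key2]
      have hws : ∑ a, w a * w a = s2 := by simp [hs2, sq]
      rw [hws, ← hs_sq]
      field_simp
    -- inner sum ≤ incohNorm2
    have hinner : ∑ i₁, ∑ i₂, ∑ i₃, Δ i₁ i₂ i₃ * u₁ i₁ * v i₂ * w' i₃ ≤ incohNorm2 δ Δ := by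
      refine le_csSup (aux_bddAbove_incoh δ Δ) ?_
      exact ⟨u₁, v, w', h1, hv_sq, le_of_eq hw'_sq, hv_abs, rfl⟩
    have hfactor : ∑ i₁, ∑ i₂, ∑ i₃, Δ i₁ i₂ i₃ * u₁ i₁ * v i₂ * w i₃
        = s * ∑ i₁, ∑ i₂, ∑ i₃, Δ i₁ i₂ i₃ * u₁ i₁ * v i₂ * w' i₃ := by
      simp only [Finset.mul_sum]
      refine Finset.sum_congr rfl fun i₁ _ => Finset.sum_congr rfl fun i₂ _ =>
        Finset.sum_congr rfl fun i₃ _ => ?_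
      simp only [hw']
      field_simp
    rw [hfactor]
    calc s * ∑ i₁, ∑ i₂, ∑ i₃, Δ i₁ i₂ i₃ * u₁ i₁ * v i₂ * w' i₃
        ≤ s * incohNorm2 δ Δ := mul_le_mul_of_nonneg_left hinner hs_pos.le
      _ ≤ matOpNorm G * incohNorm2 δ Δ :=
          mul_le_mul_of_nonneg_right hs_le (aux_incoh_nonneg hδ0 Δ)
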